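/- Every infinite connected graph (countable vertex set) contains an infinite clique, a vertex with infinitely many pairwise nonadjacent neighbors (i.e., an induced K_{1,∞}), or an induced ray as an induced subgraph. -/

import Mathlib

open SimpleGraph

/-- Infinite Ramsey theorem for pairs, two colors. -/
theorem ramsey_two_pairs {V : Type*} (R : V → V → Prop) (hR : Symmetric R) (S : Set V)
    (hS : S.Infinite) :
    ∃ T ⊆ S, T.Infinite ∧ (T.Pairwise R ∨ T.Pairwise fun a b => ¬ R a b) := by
  classical
  have step : ∀ A : Set V, A.Infinite → ∃ (x : V) (B : Set V) (c : Bool),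
      x ∈ A ∧ B ⊆ A ∧ B.Infinite ∧ x ∉ B ∧ ∀ y ∈ B, (R x y ↔ c = true) := by
    intro A hA
    obtain ⟨x, hx⟩ := hA.nonempty
    by_cases h : {y ∈ A | y ≠ x ∧ R x y}.Infinite
    · exact ⟨x, _, true, hx, fun y hy => hy.1, h, by simp, fun y hy => by
        simpa using hy.2.2⟩
    · refine ⟨x, {y ∈ A | y ≠ x ∧ ¬ R x y}, false, hx, fun y hy => hy.1, ?_, by simp,
        fun y hy => by simpa using hy.2.2⟩
      have hsub : (A \ {x}) ⊆ {y ∈ A | y ≠ x ∧ R x y} ∪ {y ∈ A | y ≠ x ∧ ¬ R x y} := by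
        intro y hy
        rcases hy with ⟨hyA, hyx⟩
        simp only [Set.mem_singleton_iff] at hyx
        by_cases hr : R x y
        · exact Or.inl ⟨hyA, hyx, hr⟩
        · exact Or.inr ⟨hyA, hyx, hr⟩
      have hinf : (A \ {x}).Infinite := hA.diff (Set.finite_singleton x)
      by_contra hfin
      exact hinf (((Set.not_infinite.mp h).union (Set.not_infinite.mp hfin)).subset hsub)
  choose xf Bf cf hx hsub hinf hnot hcol using step
  let seq : ℕ → {A : Set V // A.Infinite} := fun n =>
    Nat.rec ⟨S, hS⟩ (fun _ p => ⟨Bf p.1 p.2, hinf p.1 p.2⟩) n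
  have hseq : ∀ n, (seq (n + 1)).1 = Bf (seq n).1 (seq n).2 := fun n => rfl
  set x : ℕ → V := fun n => xf (seq n).1 (seq n).2 with hxdef
  set c : ℕ → Bool := fun n => cf (seq n).1 (seq n).2 with hcdef
  have hmono : ∀ m n, m ≤ n → (seq n).1 ⊆ (seq m).1 := by
    intro m n hmn
    induction n with
    | zero => simp_all
    | succ n ih =>
      rcases Nat.lt_or_ge m (n + 1) with h | h
      · exact (hseq n ▸ (hsub (seq n).1 (seq n).2)).trans (ih (Nat.lt_succ_iff.mp h))
      · have : m = n + 1 := le_antisymm hmn h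
        subst this; exact fun a ha => ha
  have hxin : ∀ n, x n ∈ (seq n).1 := fun n => hx (seq n).1 (seq n).2
  have hsubS : ∀ n, (seq n).1 ⊆ S := fun n => hmono 0 n (Nat.zero_le n)
  have hlater : ∀ m n, m < n → x n ∈ Bf (seq m).1 (seq m).2 := by
    intro m n hmn
    have := hmono (m + 1) n hmn (hxin n)
    rwa [hseq m] at this
  have hne : ∀ m n, m < n → x n ≠ x m := by
    intro m n hmn h
    have hl := hlater m n hmn
    rw [h] at hl
    exact hnot (seq m).1 (seq m).2 hl
  have hrel : ∀ m n, m < n → (R (x m) (x n) ↔ c m = true) := by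
    intro m n hmn
    exact hcol (seq m).1 (seq m).2 (x n) (hlater m n hmn)
  have hxi : Function.Injective x := by
    intro m n h
    rcases lt_trichotomy m n with hmn | hmn | hmn
    · exact absurd h.symm (hne m n hmn)
    · exact hmn
    · exact absurd h (hne n m hmn)
  -- pigeonhole on colors
  obtain ⟨b, hb⟩ : ∃ b : Bool, {n : ℕ | c n = b}.Infinite := by
    by_contra h
    push_neg at h
    have : (Set.univ : Set ℕ).Finite := by
      have : (Set.univ : Set ℕ) ⊆ {n | c n = true} ∪ {n | c n = false} := by
        intro n _
        simp only [Set.mem_union, Set.mem_setOf_eq]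
        cases Bool.eq_false_or_eq_true (c n) with
        | inl hc => exact Or.inl hc
        | inr hc => exact Or.inr hc
      exact ((h true).union (h false)).subset this
    exact Set.infinite_univ this
  refine ⟨x '' {n | c n = b}, ?_, hb.image (hxi.injOn), ?_⟩
  · rintro _ ⟨n, -, rfl⟩
    exact hsubS n (hxin n)
  · cases b with
    | true =>
      left
      rintro _ ⟨m, hm, rfl⟩ _ ⟨n, hn, rfl⟩ hne'
      have hmn : m ≠ n := fun h => hne' (h ▸ rfl)
      rcases hmn.lt_or_gt with h | h
      · exact (hrel m n h).mpr hm
      · exact hR ((hrel n m h).mpr hn)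
    | false =>
      right
      rintro _ ⟨m, hm, rfl⟩ _ ⟨n, hn, rfl⟩ hne'
      have hmn : m ≠ n := fun h => hne' (h ▸ rfl)
      rcases hmn.lt_or_gt with h | h
      · intro hr
        exact absurd ((hrel m n h).mp hr) (by simp [show c m = false from hm])
      · intro hr
        exact absurd ((hrel n m h).mp (hR hr)) (by simp [show c n = false from hn])

/-- Every countably infinite connected graph contains an infinite clique, a vertex with
infinitely many pairwise nonadjacent neighbors (an induced `K_{1,∞}`), or an induced ray. -/
theorem stmt6 {V : Type*} [Countable V] [Infinite V] (G : SimpleGraph V)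
    (hG : G.Connected) :
    (∃ s : Set V, s.Infinite ∧ s.Pairwise G.Adj) ∨
    (∃ (v : V) (s : Set V), s ⊆ G.neighborSet v ∧ s.Infinite ∧
      s.Pairwise fun a b => ¬ G.Adj a b) ∨
    (∃ f : ℕ → V, Function.Injective f ∧
      ∀ m n : ℕ, G.Adj (f m) (f n) ↔ (m + 1 = n ∨ n + 1 = m)) := by
  classical
  by_cases hnb : ∃ v, (G.neighborSet v : Set V).Infinite
  · obtain ⟨v, hv⟩ := hnb
    obtain ⟨T, hTsub, hTinf, hT | hT⟩ := ramsey_two_pairs G.Adj (fun _ _ h => h.symm) _ hv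
    · exact Or.inl ⟨T, hTinf, hT⟩
    · exact Or.inr (Or.inl ⟨v, T, hTsub, hTinf, hT⟩)
  push_neg at hnb
  right; right
  have v0 : V := Classical.arbitrary V
  -- balls are finite
  have hball : ∀ n : ℕ, {w | G.dist v0 w ≤ n}.Finite := by
    intro n
    induction n with
    | zero =>
      have : {w | G.dist v0 w ≤ 0} ⊆ {v0} := by
        intro w hw
        simp only [Set.mem_setOf_eq, Nat.le_zero] at hw
        exact ((hG.dist_eq_zero_iff).mp hw).symm
      exact (Set.finite_singleton v0).subset this
    | succ n ih =>
      have hcov : {w | G.dist v0 w ≤ n + 1} ⊆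
          {w | G.dist v0 w ≤ n} ∪ ⋃ u ∈ {w | G.dist v0 w ≤ n}, (G.neighborSet u : Set V) := by
        intro w hw
        simp only [Set.mem_setOf_eq] at hw
        rcases Nat.lt_or_ge (G.dist v0 w) (n + 1) with h | h
        · exact Or.inl (Nat.lt_succ_iff.mp h)
        · have hd : G.dist w v0 = n + 1 := by
            rw [dist_comm]; omega
          obtain ⟨p, hp⟩ := (hG w v0).exists_walk_length_eq_dist
          rw [hd] at hp
          cases p with
          | nil => simp at hp
          | @cons _ u _ hadj q =>
            simp only [Walk.length_cons, Nat.add_right_cancel_iff] at hp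
            have hq : G.dist v0 u ≤ n := by
              rw [dist_comm]
              exact hp ▸ dist_le q
            exact Or.inr (Set.mem_biUnion hq hadj.symm)
      exact (ih.union (ih.biUnion fun u _ => hnb u)).subset hcov
  -- "behind" sets
  set B : V → Set V := fun v => {w | G.dist v0 w = G.dist v0 v + G.dist v w} with hBdef
  have key : ∀ v : V, (B v).Infinite →
      ∃ u, G.Adj v u ∧ G.dist v0 u = G.dist v0 v + 1 ∧ (B u).Infinite := by
    intro v hBv
    set n := G.dist v0 v with hn
    have hB'inf : (B v \ {w | G.dist v0 w ≤ n}).Infinite := hBv.diff (hball n)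
    have hstep : ∀ w ∈ B v \ {w | G.dist v0 w ≤ n},
        ∃ u, G.Adj v u ∧ G.dist v0 u = n + 1 ∧ w ∈ B u := by
      rintro w ⟨hwB, hwfar⟩
      simp only [hBdef, Set.mem_setOf_eq] at hwB hwfar ⊢
      push_neg at hwfar
      have hvw : G.dist v w ≠ 0 := by omega
      obtain ⟨p, hp⟩ := (hG v w).exists_walk_length_eq_dist
      cases p with
      | nil => rw [← hp] at hvw; simp at hvw
      | @cons _ u _ hadj q =>
        simp only [Walk.length_cons] at hp
        have hqd : G.dist u w ≤ G.dist v w - 1 := by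
          have := dist_le q
          omega
        have htri : G.dist v w ≤ G.dist v u + G.dist u w := hG.dist_triangle
        have hvu : G.dist v u = 1 := dist_eq_one_iff_adj.mpr hadj
        have huw : G.dist u w + 1 = G.dist v w := by omega
        have htri2 : G.dist v0 w ≤ G.dist v0 u + G.dist u w := hG.dist_triangle
        have htri3 : G.dist v0 u ≤ G.dist v0 v + G.dist v u := hG.dist_triangle
        have hv0u : G.dist v0 u = n + 1 := by omega
        exact ⟨u, hadj, hv0u, by omega⟩
    by_contra hcon
    push_neg at hcon
    have hcov : (B v \ {w | G.dist v0 w ≤ n}) ⊆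
        ⋃ u ∈ {u | G.Adj v u ∧ G.dist v0 u = n + 1}, B u := by
      intro w hw
      obtain ⟨u, h1, h2, h3⟩ := hstep w hw
      exact Set.mem_biUnion ⟨h1, h2⟩ h3
    have hNfin : {u | G.Adj v u ∧ G.dist v0 u = n + 1}.Finite :=
      (hnb v).subset fun u hu => hu.1
    have : (⋃ u ∈ {u | G.Adj v u ∧ G.dist v0 u = n + 1}, B u).Finite := by
      refine hNfin.biUnion fun u hu => ?_
      rw [← Set.not_infinite]
      exact fun h => h (hcon u hu.1 hu.2)
    exact hB'inf (this.subset hcov)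
  have hBv0 : (B v0).Infinite := by
    have : B v0 = Set.univ := by
      ext w
      simp [hBdef, SimpleGraph.dist_self]
    rw [this]
    exact Set.infinite_univ
  let f : ℕ → {v : V // (B v).Infinite} := fun n =>
    Nat.rec ⟨v0, hBv0⟩
      (fun _ p => ⟨(key p.1 p.2).choose, (key p.1 p.2).choose_spec.2.2⟩) n
  have hadj : ∀ n, G.Adj (f n).1 (f (n + 1)).1 := fun n => (key (f n).1 (f n).2).choose_spec.1
  have hdist : ∀ n, G.dist v0 (f n).1 = n := by
    intro n
    induction n with
    | zero => exact dist_self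
    | succ n ih =>
      have h1 := (key (f n).1 (f n).2).choose_spec.2.1
      have h2 : G.dist v0 ((key (f n).1 (f n).2).choose) = n + 1 := by omega
      exact h2
  refine ⟨fun n => (f n).1, ?_, ?_⟩
  · intro m n h
    have h' : (f m).1 = (f n).1 := h
    have := hdist m
    rw [h', hdist n] at this
    omega
  · intro m n
    constructor
    · intro h
      have h1 : G.dist v0 (f n).1 ≤ G.dist v0 (f m).1 + G.dist (f m).1 (f n).1 :=
        hG.dist_triangle
      have h2 : G.dist v0 (f m).1 ≤ G.dist v0 (f n).1 + G.dist (f n).1 (f m).1 :=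
        hG.dist_triangle
      have h3 : G.dist (f m).1 (f n).1 = 1 := dist_eq_one_iff_adj.mpr h
      have h4 : G.dist (f n).1 (f m).1 = 1 := dist_eq_one_iff_adj.mpr h.symm
      have hmn : m ≠ n := by
        intro e
        subst e
        exact G.irrefl h
      rw [hdist, hdist, h3] at h1
      rw [hdist, hdist, h4] at h2
      omega
    · rintro (h | h)
      · exact h ▸ hadj m
      · exact (h ▸ hadj n).symm
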